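/- arXiv:2401.10200 — 3 statements merged into one kernel-verified Lean document; each statement's English description precedes it below -/
import Mathlib

section
/- Let n ≥ 1, let R, R̂ ⊆ 𝔽₂ⁿ be 𝔽₂-linear subspaces, let Δ ∈ 𝔽₂ⁿ ∖ R and Δ̂ ∈ 𝔽₂ⁿ ∖ R̂, and let x₀, z₀, x₁, z₁ ∈ 𝔽₂ⁿ satisfy x₀ + x₁ ∉ R̂⊥ or z₀ + z₁ ∉ R⊥. Then for every finite-dimensional complex vector space V and every linear operator ρ on ℂ[𝔽₂ⁿ] ⊗ V, writing each Pauli operator P for P ⊗ id_V, one has ∑_{x ∈ R+Δ} ∑_{z ∈ R̂+Δ̂} (Z^z X^x)(X^{x₀} Z^{z₀})(X^x Z^z) · ρ · (Z^z X^x)(Z^{z₁} X^{x₁})(X^x Z^z) = 0. -/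
/-!
Pauli Twirl over Affine Subspaces (Lemma 2.2 of "Quantum State Obfuscation from
Classical Oracles").

We work in the Hilbert space `ℂ[𝔽₂ⁿ]`, formalized as `EuclideanSpace ℂ (Fin n → ZMod 2)`,
with Pauli operators `X^x |v⟩ = |v + x⟩` and `Z^z |v⟩ = (−1)^{z·v} |v⟩`.
-/

open scoped BigOperators

noncomputable section

attribute [local instance] Classical.propDecidable

abbrev Fvec (n : ℕ) : Type := Fin n → ZMod 2

abbrev QSpace (n : ℕ) : Type := EuclideanSpace ℂ (Fvec n)

/-- The ±1 lift of a bit: `+1` if `b = 0` and `−1` if `b = 1`. -/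
def sgn (b : ZMod 2) : ℂ := if b = 0 then 1 else -1

/-- The dot product over `𝔽₂`. -/
def dotp {n : ℕ} (x y : Fvec n) : ZMod 2 := ∑ i, x i * y i

/-- The Pauli operator `X^x`, acting by `X^x |v⟩ = |v + x⟩`. -/
def PauliX {n : ℕ} (x : Fvec n) : QSpace n →ₗ[ℂ] QSpace n where
  toFun ψ := WithLp.toLp 2 (fun v => ψ (v + x))
  map_add' := fun _ _ => rfl
  map_smul' := fun _ _ => rfl

/-- The Pauli operator `Z^z`, acting by `Z^z |v⟩ = (−1)^{z·v} |v⟩`. -/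
def PauliZ {n : ℕ} (z : Fvec n) : QSpace n →ₗ[ℂ] QSpace n where
  toFun ψ := WithLp.toLp 2 (fun v => sgn (dotp z v) * ψ v)
  map_add' := fun f g => by ext v; simp [mul_add]
  map_smul' := fun c f => by ext v; simp [mul_left_comm]

/-- The orthogonal complement `R⊥ = {w : w·r = 0 for all r ∈ R}` with respect to the
`𝔽₂` dot product. -/
def dualSub {n : ℕ} (R : Submodule (ZMod 2) (Fvec n)) : Submodule (ZMod 2) (Fvec n) where
  carrier := {w | ∀ r ∈ R, dotp w r = 0}
  add_mem' := by
    intro a b ha hb r hr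
    have h : dotp (a + b) r = dotp a r + dotp b r := by
      simp [dotp, add_mul, Finset.sum_add_distrib]
    rw [h, ha r hr, hb r hr, add_zero]
  zero_mem' := by
    intro r hr
    simp [dotp]
  smul_mem' := by
    intro c a ha r hr
    have h : dotp (c • a) r = c * dotp a r := by
      simp [dotp, Finset.mul_sum, mul_assoc]
    rw [h, ha r hr, mul_zero]

lemma zmod2_cases (a : ZMod 2) : a = 0 ∨ a = 1 := by revert a; decide

lemma sgn_add (a b : ZMod 2) : sgn (a + b) = sgn a * sgn b := by
  rcases zmod2_cases a with ha | ha <;> rcases zmod2_cases b with hb | hb <;>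
    subst ha <;> subst hb <;> simp [sgn, show (1+1:ZMod 2)=0 from rfl]

lemma sgn_mul_self (a : ZMod 2) : sgn a * sgn a = 1 := by
  rcases zmod2_cases a with ha | ha <;> subst ha <;> norm_num [sgn]

lemma dotp_add_left {n : ℕ} (a b c : Fvec n) : dotp (a + b) c = dotp a c + dotp b c := by
  simp [dotp, add_mul, Finset.sum_add_distrib]

lemma dotp_add_right {n : ℕ} (a b c : Fvec n) : dotp a (b + c) = dotp a b + dotp a c := by
  simp [dotp, mul_add, Finset.sum_add_distrib]

lemma dotp_comm {n : ℕ} (a b : Fvec n) : dotp a b = dotp b a := by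
  simp [dotp, mul_comm]

lemma fvec_add_self {n : ℕ} (a : Fvec n) : a + a = 0 := by
  funext i
  have : ∀ b : ZMod 2, b + b = 0 := by decide
  exact this _

lemma PauliX_apply {n : ℕ} (x : Fvec n) (ψ : QSpace n) (v : Fvec n) :
    (PauliX x ψ) v = ψ (v + x) := rfl

lemma PauliZ_apply {n : ℕ} (z : Fvec n) (ψ : QSpace n) (v : Fvec n) :
    (PauliZ z ψ) v = sgn (dotp z v) * ψ v := rfl

lemma conj_left {n : ℕ} (x z x₀ z₀ : Fvec n) :
    PauliZ z ∘ₗ PauliX x ∘ₗ PauliX x₀ ∘ₗ PauliZ z₀ ∘ₗ PauliX x ∘ₗ PauliZ z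
      = (sgn (dotp z₀ x) * sgn (dotp z x₀)) • (PauliX x₀ ∘ₗ PauliZ z₀) := by
  apply LinearMap.ext; intro ψ; ext v
  have hv : v + x + x₀ + x = v + x₀ := by
    have : v + x + x₀ + x = v + x₀ + (x + x) := by ring
    rw [this, fvec_add_self, add_zero]
  simp only [LinearMap.comp_apply, LinearMap.smul_apply, PauliX_apply, PauliZ_apply,
    PiLp.smul_apply, smul_eq_mul, hv]
  simp only [dotp_add_right, sgn_add]
  have h2 : ∀ a : ZMod 2, sgn a * sgn a = 1 := sgn_mul_self
  ring_nf
  rw [sq, h2, one_mul]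


lemma conj_right {n : ℕ} (x z x₁ z₁ : Fvec n) :
    PauliZ z ∘ₗ PauliX x ∘ₗ PauliZ z₁ ∘ₗ PauliX x₁ ∘ₗ PauliX x ∘ₗ PauliZ z
      = (sgn (dotp z₁ x) * sgn (dotp z x₁)) • (PauliZ z₁ ∘ₗ PauliX x₁) := by
  apply LinearMap.ext; intro ψ; ext v
  have hv : v + x + x₁ + x = v + x₁ := by
    have : v + x + x₁ + x = v + x₁ + (x + x) := by ring
    rw [this, fvec_add_self, add_zero]
  simp only [LinearMap.comp_apply, LinearMap.smul_apply, PauliX_apply, PauliZ_apply,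
    PiLp.smul_apply, smul_eq_mul]
  simp only [dotp_add_right, sgn_add]
  have h2 : ∀ a : ZMod 2, sgn a * sgn a = 1 := sgn_mul_self
  ring_nf
  rw [show v + x * 2 + x₁ = v + x₁ by rw [← hv]; ring]
  simp only [sq, h2, one_mul, mul_one]

lemma char_sum {n : ℕ} (R : Submodule (ZMod 2) (Fvec n)) (w : Fvec n)
    (hw : ∃ r ∈ R, dotp w r ≠ 0) : ∑ x : R, sgn (dotp w (x : Fvec n)) = 0 := by
  obtain ⟨r, hrR, hr⟩ := hw
  have hr1 : sgn (dotp w r) = -1 := by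
    rcases zmod2_cases (dotp w r) with h | h
    · exact absurd h hr
    · simp [sgn, h, show (1:ZMod 2) ≠ 0 by decide]
  set S := ∑ x : R, sgn (dotp w (x : Fvec n)) with hS
  have key : S = -S := by
    have := Fintype.sum_equiv (Equiv.addRight (⟨r, hrR⟩ : R))
      (fun x : R => sgn (dotp w ((x : Fvec n) + r)))
      (fun x : R => sgn (dotp w (x : Fvec n))) (fun x => rfl)
    calc S = ∑ x : R, sgn (dotp w ((x : Fvec n) + r)) := by
            rw [this]
      _ = ∑ x : R, sgn (dotp w (x : Fvec n)) * sgn (dotp w r) := by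
            simp [dotp_add_right, sgn_add]
      _ = -S := by rw [← Finset.sum_mul, hr1, mul_neg_one]
  have : (2 : ℂ) * S = 0 := by linear_combination key
  have h2 : (2 : ℂ) ≠ 0 := two_ne_zero
  exact (mul_eq_zero.mp this).resolve_left h2

lemma char_sum_coset {n : ℕ} (R : Submodule (ZMod 2) (Fvec n)) (w Δ : Fvec n)
    (hw : ∃ r ∈ R, dotp w r ≠ 0) :
    ∑ x : R, sgn (dotp w ((x : Fvec n) + Δ)) = 0 := by
  have : ∑ x : R, sgn (dotp w ((x : Fvec n) + Δ))
      = (∑ x : R, sgn (dotp w (x : Fvec n))) * sgn (dotp w Δ) := by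
    rw [Finset.sum_mul]
    exact Finset.sum_congr rfl fun x _ => by rw [dotp_add_right, sgn_add]
  rw [this, char_sum R w hw, zero_mul]


/-- **Pauli twirl over affine subspaces.**
Let `R, R̂ ⊆ 𝔽₂ⁿ` be subspaces, `Δ ∉ R`, `Δ̂ ∉ R̂`, and let `x₀, z₀, x₁, z₁` be such that
`x₀ + x₁ ∉ R̂⊥` or `z₀ + z₁ ∉ R⊥`.  Then for any finite-dimensional complex vector space
`V` and any linear operator `ρ` on `ℂ[𝔽₂ⁿ] ⊗ V` (writing each Pauli `P` for `P ⊗ id_V`):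
`∑_{x ∈ R+Δ, z ∈ R̂+Δ̂} (Z^z X^x)(X^{x₀} Z^{z₀})(X^x Z^z) ρ (Z^z X^x)(Z^{z₁} X^{x₁})(X^x Z^z) = 0`. -/
theorem pauli_twirl_over_affine_subspaces
    {n : ℕ} (hn : 1 ≤ n)
    (R Rhat : Submodule (ZMod 2) (Fvec n))
    (Δ Δhat : Fvec n) (hΔ : Δ ∉ R) (hΔhat : Δhat ∉ Rhat)
    (x₀ z₀ x₁ z₁ : Fvec n)
    (h : x₀ + x₁ ∉ dualSub Rhat ∨ z₀ + z₁ ∉ dualSub R)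
    (V : Type*) [AddCommGroup V] [Module ℂ V] [FiniteDimensional ℂ V]
    (ρ : TensorProduct ℂ (QSpace n) V →ₗ[ℂ] TensorProduct ℂ (QSpace n) V) :
    ∑ x : R, ∑ z : Rhat,
      (LinearMap.rTensor V
          (PauliZ ((z : Fvec n) + Δhat) ∘ₗ PauliX ((x : Fvec n) + Δ) ∘ₗ
            PauliX x₀ ∘ₗ PauliZ z₀ ∘ₗ PauliX ((x : Fvec n) + Δ) ∘ₗ
              PauliZ ((z : Fvec n) + Δhat))) ∘ₗ
        ρ ∘ₗ
      (LinearMap.rTensor V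
          (PauliZ ((z : Fvec n) + Δhat) ∘ₗ PauliX ((x : Fvec n) + Δ) ∘ₗ
            PauliZ z₁ ∘ₗ PauliX x₁ ∘ₗ PauliX ((x : Fvec n) + Δ) ∘ₗ
              PauliZ ((z : Fvec n) + Δhat)))
      = 0 := by
  set T : TensorProduct ℂ (QSpace n) V →ₗ[ℂ] TensorProduct ℂ (QSpace n) V :=
    (LinearMap.rTensor V (PauliX x₀ ∘ₗ PauliZ z₀)) ∘ₗ ρ ∘ₗ
      (LinearMap.rTensor V (PauliZ z₁ ∘ₗ PauliX x₁)) with hT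
  set c : Fvec n → Fvec n → ℂ := fun X Z =>
    (sgn (dotp z₀ X) * sgn (dotp Z x₀)) * (sgn (dotp z₁ X) * sgn (dotp Z x₁)) with hc
  have key : ∀ (x : R) (z : Rhat),
      (LinearMap.rTensor V
          (PauliZ ((z : Fvec n) + Δhat) ∘ₗ PauliX ((x : Fvec n) + Δ) ∘ₗ
            PauliX x₀ ∘ₗ PauliZ z₀ ∘ₗ PauliX ((x : Fvec n) + Δ) ∘ₗ
              PauliZ ((z : Fvec n) + Δhat))) ∘ₗ
        ρ ∘ₗ
      (LinearMap.rTensor V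
          (PauliZ ((z : Fvec n) + Δhat) ∘ₗ PauliX ((x : Fvec n) + Δ) ∘ₗ
            PauliZ z₁ ∘ₗ PauliX x₁ ∘ₗ PauliX ((x : Fvec n) + Δ) ∘ₗ
              PauliZ ((z : Fvec n) + Δhat)))
      = c ((x : Fvec n) + Δ) ((z : Fvec n) + Δhat) • T := by
    intro x z
    rw [conj_left ((x : Fvec n) + Δ) ((z : Fvec n) + Δhat) x₀ z₀,
        conj_right ((x : Fvec n) + Δ) ((z : Fvec n) + Δhat) x₁ z₁,
        LinearMap.rTensor_smul, LinearMap.rTensor_smul]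
    simp only [LinearMap.smul_comp, LinearMap.comp_smul, smul_smul, hT, hc]
    congr 1
    ring
  have hscalar : ∑ x : R, ∑ z : Rhat, c ((x : Fvec n) + Δ) ((z : Fvec n) + Δhat) = 0 := by
    rcases h with hx | hz
    · have hx' : ¬ ∀ r ∈ Rhat, dotp (x₀ + x₁) r = 0 := hx
      push_neg at hx'
      apply Finset.sum_eq_zero
      intro x _
      calc ∑ z : Rhat, c ((x : Fvec n) + Δ) ((z : Fvec n) + Δhat)
          = ∑ z : Rhat, (sgn (dotp z₀ ((x : Fvec n) + Δ)) * sgn (dotp z₁ ((x : Fvec n) + Δ)))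
              * sgn (dotp (x₀ + x₁) ((z : Fvec n) + Δhat)) := by
            refine Finset.sum_congr rfl fun z _ => ?_
            have e : sgn (dotp (x₀ + x₁) ((z : Fvec n) + Δhat))
                = sgn (dotp ((z : Fvec n) + Δhat) x₀) * sgn (dotp ((z : Fvec n) + Δhat) x₁) := by
              rw [dotp_comm, dotp_add_right, sgn_add]
            rw [hc, e]
            ring
        _ = (sgn (dotp z₀ ((x : Fvec n) + Δ)) * sgn (dotp z₁ ((x : Fvec n) + Δ)))
              * ∑ z : Rhat, sgn (dotp (x₀ + x₁) ((z : Fvec n) + Δhat)) := by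
            rw [Finset.mul_sum]
        _ = 0 := by rw [char_sum_coset Rhat (x₀ + x₁) Δhat hx', mul_zero]
    · have hz' : ¬ ∀ r ∈ R, dotp (z₀ + z₁) r = 0 := hz
      push_neg at hz'
      rw [Finset.sum_comm]
      apply Finset.sum_eq_zero
      intro z _
      calc ∑ x : R, c ((x : Fvec n) + Δ) ((z : Fvec n) + Δhat)
          = ∑ x : R, (sgn (dotp ((z : Fvec n) + Δhat) x₀) * sgn (dotp ((z : Fvec n) + Δhat) x₁))
              * sgn (dotp (z₀ + z₁) ((x : Fvec n) + Δ)) := by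
            refine Finset.sum_congr rfl fun x _ => ?_
            have e : sgn (dotp (z₀ + z₁) ((x : Fvec n) + Δ))
                = sgn (dotp z₀ ((x : Fvec n) + Δ)) * sgn (dotp z₁ ((x : Fvec n) + Δ)) := by
              rw [dotp_add_left, sgn_add]
            rw [hc, e]
            ring
        _ = (sgn (dotp ((z : Fvec n) + Δhat) x₀) * sgn (dotp ((z : Fvec n) + Δhat) x₁))
              * ∑ x : R, sgn (dotp (z₀ + z₁) ((x : Fvec n) + Δ)) := by
            rw [Finset.mul_sum]
        _ = 0 := by rw [char_sum_coset R (z₀ + z₁) Δ hz', mul_zero]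
  calc (∑ x : R, ∑ z : Rhat,
      (LinearMap.rTensor V
          (PauliZ ((z : Fvec n) + Δhat) ∘ₗ PauliX ((x : Fvec n) + Δ) ∘ₗ
            PauliX x₀ ∘ₗ PauliZ z₀ ∘ₗ PauliX ((x : Fvec n) + Δ) ∘ₗ
              PauliZ ((z : Fvec n) + Δhat))) ∘ₗ
        ρ ∘ₗ
      (LinearMap.rTensor V
          (PauliZ ((z : Fvec n) + Δhat) ∘ₗ PauliX ((x : Fvec n) + Δ) ∘ₗ
            PauliZ z₁ ∘ₗ PauliX x₁ ∘ₗ PauliX ((x : Fvec n) + Δ) ∘ₗ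
              PauliZ ((z : Fvec n) + Δhat))))
      = ∑ x : R, ∑ z : Rhat, c ((x : Fvec n) + Δ) ((z : Fvec n) + Δhat) • T := by
        exact Finset.sum_congr rfl fun x _ => Finset.sum_congr rfl fun z _ => key x z
    _ = (∑ x : R, ∑ z : Rhat, c ((x : Fvec n) + Δ) ((z : Fvec n) + Δhat)) • T := by
        simp only [Finset.sum_smul]
    _ = 0 := by rw [hscalar, zero_smul]

end
end

section
/- Let E be a complex inner product space, let K be a nonempty finite set and N ≥ 1. For each k ∈ K let ψ_k ∈ E with ‖ψ_k‖ ≤ 1, let D_k be an orthogonal projection on E, and let Π_{k,1}, …, Π_{k,N} be orthogonal projections on E with Π_{k,i}Π_{k,j} = 0 for i ≠ j and ∑_{i=1}^N Π_{k,i} ψ_k = ψ_k. Then (1/|K|)∑_{k∈K} ‖D_k ψ_k‖² − ∑_{i=1}^N (1/|K|)∑_{k∈K} ‖D_k Π_{k,i} ψ_k‖² ≤ N · ( ∑_{i≠j} (1/|K|)∑_{k∈K} ‖Π_{k,j} D_k Π_{k,i} ψ_k‖² )^{1/2}. -/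
/-!
Lemma 2.4 ("map-distinguish") of "Quantum State Obfuscation from Classical Oracles":
a Cauchy–Schwarz bound comparing a distinguisher's success probability on a state with
its average success probability on the components of a projective submeasurement.
-/

open scoped BigOperators

noncomputable section

/-- Splitting a sum over `Fin N` into a diagonal term and off-diagonal terms. -/
private lemma sum_split_diag {N : ℕ} (i : Fin N) (a : Fin N → ℝ) :
    ∑ j, a j = a i + ∑ j, if i = j then 0 else a j := by
  have h : ∀ j, a j = (if i = j then a j else 0) + (if i = j then 0 else a j) := by
    intro j; by_cases h : i = j <;> simp [h]
  rw [Finset.sum_congr rfl (fun j _ => h j), Finset.sum_add_distrib, Finset.sum_ite_eq]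
  simp

/-- Let `K` be a nonempty finite set of keys and `N ≥ 1`.  For each `k ∈ K`, let `ψ_k`
be a vector of norm at most `1`, `D_k` an orthogonal projection (a binary-outcome
distinguisher), and `P_{k,1}, …, P_{k,N}` pairwise-orthogonal projections with
`∑ᵢ P_{k,i} ψ_k = ψ_k`.  Then
`𝔼_k ‖D_k ψ_k‖² − ∑ᵢ 𝔼_k ‖D_k P_{k,i} ψ_k‖²
  ≤ N · (∑_{i ≠ j} 𝔼_k ‖P_{k,j} D_k P_{k,i} ψ_k‖²)^{1/2}`. -/
theorem map_distinguish
    {E : Type*} [NormedAddCommGroup E] [InnerProductSpace ℂ E]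
    {K : Type*} [Fintype K] [Nonempty K] {N : ℕ} (hN : 1 ≤ N)
    (ψ : K → E) (hψ : ∀ k, ‖ψ k‖ ≤ 1)
    (D : K → E →ₗ[ℂ] E)
    (hDidem : ∀ k, D k ∘ₗ D k = D k)
    (hDsa : ∀ k (u v : E), (inner ℂ (D k u) v : ℂ) = inner ℂ u (D k v))
    (P : K → Fin N → (E →ₗ[ℂ] E))
    (hPidem : ∀ k i, P k i ∘ₗ P k i = P k i)
    (hPsa : ∀ k i (u v : E), (inner ℂ (P k i u) v : ℂ) = inner ℂ u (P k i v))
    (hPorth : ∀ k i j, i ≠ j → P k i ∘ₗ P k j = 0)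
    (hPψ : ∀ k, ∑ i, P k i (ψ k) = ψ k) :
    (1 / (Fintype.card K : ℝ)) * (∑ k, ‖D k (ψ k)‖ ^ 2)
        - ∑ i, (1 / (Fintype.card K : ℝ)) * ∑ k, ‖D k (P k i (ψ k))‖ ^ 2
      ≤ N * Real.sqrt (∑ i, ∑ j,
          if i = j then 0
          else (1 / (Fintype.card K : ℝ)) * ∑ k, ‖P k j (D k (P k i (ψ k)))‖ ^ 2) := by
  classical
  set c : ℝ := (Fintype.card K : ℝ) with hc
  have hc0 : (0 : ℝ) < c := by
    have h : 0 < Fintype.card K := Fintype.card_pos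
    simp only [hc]
    exact_mod_cast h
  -- idempotency pointwise
  have hDid : ∀ k (x : E), D k (D k x) = D k x := by
    intro k x
    have := DFunLike.congr_fun (hDidem k) x
    simpa using this
  have hPid : ∀ k i (x : E), P k i (P k i x) = P k i x := by
    intro k i x
    have := DFunLike.congr_fun (hPidem k i) x
    simpa using this
  have hPo : ∀ k i j, i ≠ j → ∀ x : E, P k i (P k j x) = 0 := by
    intro k i j hij x
    have := DFunLike.congr_fun (hPorth k i j hij) x
    simpa using this
  -- Step 1 : per-key cross-term bound
  have key : ∀ k, ‖D k (ψ k)‖ ^ 2 - ∑ i, ‖D k (P k i (ψ k))‖ ^ 2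
      ≤ ∑ i, ∑ j, if i = j then 0
          else ‖P k i (ψ k)‖ * ‖P k i (D k (P k j (ψ k)))‖ := by
    intro k
    have hsum : D k (ψ k) = ∑ i, D k (P k i (ψ k)) := by
      conv_lhs => rw [← hPψ k]
      exact map_sum (D k) _ _
    have expand : ‖D k (ψ k)‖ ^ 2
        = ∑ i, ∑ j,
            RCLike.re (inner ℂ (D k (P k i (ψ k))) (D k (P k j (ψ k))) : ℂ) := by
      rw [hsum, ← inner_self_eq_norm_sq (𝕜 := ℂ), sum_inner, map_sum]
      refine Finset.sum_congr rfl fun i _ => ?_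
      rw [inner_sum, map_sum]
    have hcross : ∀ i j, i ≠ j →
        RCLike.re (inner ℂ (D k (P k i (ψ k))) (D k (P k j (ψ k))) : ℂ)
          ≤ ‖P k i (ψ k)‖ * ‖P k i (D k (P k j (ψ k)))‖ := by
      intro i j hij
      have h1 : (inner ℂ (D k (P k i (ψ k))) (D k (P k j (ψ k))) : ℂ)
          = inner ℂ (P k i (ψ k)) (P k i (D k (P k j (ψ k)))) := by
        rw [hDsa, hDid]
        conv_lhs => rw [← hPid k i (ψ k)]
        rw [hPsa]
      rw [h1]
      exact le_trans (RCLike.re_le_norm _) (norm_inner_le_norm _ _)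
    have hdiag : ∀ i,
        RCLike.re (inner ℂ (D k (P k i (ψ k))) (D k (P k i (ψ k))) : ℂ)
          = ‖D k (P k i (ψ k))‖ ^ 2 := fun i => inner_self_eq_norm_sq _
    rw [expand, sub_le_iff_le_add]
    calc ∑ i, ∑ j, RCLike.re (inner ℂ (D k (P k i (ψ k))) (D k (P k j (ψ k))) : ℂ)
        = ∑ i, (‖D k (P k i (ψ k))‖ ^ 2
            + ∑ j, if i = j then 0
                else RCLike.re (inner ℂ (D k (P k i (ψ k))) (D k (P k j (ψ k))) : ℂ)) := by
          refine Finset.sum_congr rfl fun i _ => ?_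
          rw [sum_split_diag i, hdiag]
      _ ≤ ∑ i, (‖D k (P k i (ψ k))‖ ^ 2
            + ∑ j, if i = j then 0
                else ‖P k i (ψ k)‖ * ‖P k i (D k (P k j (ψ k)))‖) := by
          refine Finset.sum_le_sum fun i _ => ?_
          refine add_le_add le_rfl (Finset.sum_le_sum fun j _ => ?_)
          by_cases h : i = j
          · simp [h]
          · simpa [h] using hcross i j h
      _ = (∑ i, ∑ j, if i = j then 0
            else ‖P k i (ψ k)‖ * ‖P k i (D k (P k j (ψ k)))‖)
          + ∑ i, ‖D k (P k i (ψ k))‖ ^ 2 := by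
          rw [Finset.sum_add_distrib]; ring
  -- Step 2 : components have total squared norm equal to ‖ψ k‖²
  have comp : ∀ k, ∑ i, ‖P k i (ψ k)‖ ^ 2 = ‖ψ k‖ ^ 2 := by
    intro k
    have expand : ‖ψ k‖ ^ 2
        = ∑ i, ∑ j, RCLike.re (inner ℂ (P k i (ψ k)) (P k j (ψ k)) : ℂ) := by
      conv_lhs => rw [← hPψ k]
      rw [← inner_self_eq_norm_sq (𝕜 := ℂ), sum_inner, map_sum]
      refine Finset.sum_congr rfl fun i _ => ?_
      rw [inner_sum, map_sum]
    rw [expand]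
    refine (Finset.sum_congr rfl fun i _ => ?_).symm
    rw [sum_split_diag i]
    have hz : ∀ j, (if i = j then 0
        else RCLike.re (inner ℂ (P k i (ψ k)) (P k j (ψ k)) : ℂ)) = 0 := by
      intro j
      by_cases h : i = j
      · simp [h]
      · have : (inner ℂ (P k i (ψ k)) (P k j (ψ k)) : ℂ) = 0 := by
          conv_lhs => rw [← hPid k i (ψ k)]
          rw [hPsa, hPo k i j h]
          simp
        simp [h, this]
    rw [Finset.sum_congr rfl fun j _ => hz j]
    simp [inner_self_eq_norm_sq (𝕜 := ℂ)]
    rw [← Complex.ofReal_pow, Complex.ofReal_re]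
  -- Step 3 : Cauchy–Schwarz over triples (k, i, j)
  set S : ℝ := ∑ i, ∑ j, if i = j then 0
      else (1 / c) * ∑ k, ‖P k j (D k (P k i (ψ k)))‖ ^ 2 with hS
  have hSnonneg : 0 ≤ S := by
    refine Finset.sum_nonneg fun i _ => Finset.sum_nonneg fun j _ => ?_
    by_cases h : i = j
    · simp [h]
    · simp only [h, if_false]
      positivity
  -- the norms indexed by triples
  set f : K × Fin N × Fin N → ℝ := fun t =>
    if t.2.1 = t.2.2 then 0 else ‖P t.1 t.2.1 (ψ t.1)‖ with hf
  set g : K × Fin N × Fin N → ℝ := fun t =>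
    if t.2.1 = t.2.2 then 0 else ‖P t.1 t.2.1 (D t.1 (P t.1 t.2.2 (ψ t.1)))‖ with hg
  have cauchy := Real.sum_mul_le_sqrt_mul_sqrt Finset.univ f g
  have hA : ∑ t : K × Fin N × Fin N, f t * g t
      = ∑ k, ∑ i, ∑ j, if i = j then 0
          else ‖P k i (ψ k)‖ * ‖P k i (D k (P k j (ψ k)))‖ := by
    rw [Fintype.sum_prod_type]
    refine Finset.sum_congr rfl fun k _ => ?_
    rw [Fintype.sum_prod_type]
    refine Finset.sum_congr rfl fun i _ => Finset.sum_congr rfl fun j _ => ?_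
    by_cases h : i = j <;> simp [hf, hg, h]
  have hF : ∑ t : K × Fin N × Fin N, f t ^ 2 ≤ N * c := by
    rw [Fintype.sum_prod_type]
    have hk : ∀ k : K, (∑ p : Fin N × Fin N, f (k, p) ^ 2) ≤ N := by
      intro k
      rw [Fintype.sum_prod_type]
      have : ∀ i : Fin N, (∑ j, f (k, i, j) ^ 2) ≤ (N : ℝ) * ‖P k i (ψ k)‖ ^ 2 := by
        intro i
        have : ∀ j : Fin N, f (k, i, j) ^ 2 ≤ ‖P k i (ψ k)‖ ^ 2 := by
          intro j
          by_cases h : i = j <;> simp [hf, h]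
        calc ∑ j, f (k, i, j) ^ 2 ≤ ∑ _j : Fin N, ‖P k i (ψ k)‖ ^ 2 :=
              Finset.sum_le_sum fun j _ => this j
          _ = (N : ℝ) * ‖P k i (ψ k)‖ ^ 2 := by
              simp [Finset.sum_const, mul_comm]
      calc ∑ i, ∑ j, f (k, i, j) ^ 2 ≤ ∑ i, (N : ℝ) * ‖P k i (ψ k)‖ ^ 2 :=
            Finset.sum_le_sum fun i _ => this i
        _ = (N : ℝ) * ∑ i, ‖P k i (ψ k)‖ ^ 2 := by rw [Finset.mul_sum]
        _ = (N : ℝ) * ‖ψ k‖ ^ 2 := by rw [comp k]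
        _ ≤ (N : ℝ) * 1 := by
            have h1 : ‖ψ k‖ ^ 2 ≤ 1 := by
              have := hψ k
              nlinarith [norm_nonneg (ψ k)]
            have hN0 : (0 : ℝ) ≤ N := by positivity
            nlinarith
        _ = (N : ℝ) := mul_one _
    calc ∑ k, ∑ p : Fin N × Fin N, f (k, p) ^ 2 ≤ ∑ _k : K, (N : ℝ) :=
          Finset.sum_le_sum fun k _ => hk k
      _ = c * N := by simp [hc, Finset.sum_const, mul_comm]
      _ = N * c := mul_comm _ _
  have hG : ∑ t : K × Fin N × Fin N, g t ^ 2 = c * S := by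
    rw [hS, Finset.mul_sum]
    rw [Fintype.sum_prod_type]
    rw [Finset.sum_comm]
    -- now LHS : ∑ p : Fin N × Fin N, ∑ k, g (k, p) ^ 2   vs  ∑ i, c * ∑ j ...
    rw [Fintype.sum_prod_type]
    -- LHS : ∑ i, ∑ j, ∑ k, g (k, i, j)^2 ;  but note index roles are swapped
    rw [Finset.sum_comm]
    refine Finset.sum_congr rfl fun i _ => ?_
    rw [Finset.mul_sum]
    refine Finset.sum_congr rfl fun j _ => ?_
    by_cases h : i = j
    · simp [hg, h]
    · have h' : j ≠ i := fun hji => h hji.symm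
      simp only [h, if_false, hg, h', ← Finset.mul_sum]
      rw [← mul_assoc, mul_one_div_cancel (ne_of_gt hc0), one_mul]
  -- Put everything together
  have hLHS : (1 / c) * (∑ k, ‖D k (ψ k)‖ ^ 2)
        - ∑ i, (1 / c) * ∑ k, ‖D k (P k i (ψ k))‖ ^ 2
      ≤ (1 / c) * ∑ t : K × Fin N × Fin N, f t * g t := by
    rw [hA]
    have : ∑ i, (1 / c) * ∑ k, ‖D k (P k i (ψ k))‖ ^ 2
        = (1 / c) * ∑ k, ∑ i, ‖D k (P k i (ψ k))‖ ^ 2 := by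
      rw [← Finset.mul_sum, Finset.sum_comm]
    rw [this, ← mul_sub, ← Finset.sum_sub_distrib]
    have hsum := Finset.sum_le_sum fun k (_ : k ∈ Finset.univ) => key k
    have h1c : (0 : ℝ) ≤ 1 / c := by positivity
    exact mul_le_mul_of_nonneg_left hsum h1c
  have hRHS : (1 / c) * ∑ t : K × Fin N × Fin N, f t * g t ≤ N * Real.sqrt S := by
    have h2 : Real.sqrt (∑ t, f t ^ 2) * Real.sqrt (∑ t, g t ^ 2)
        ≤ Real.sqrt (N * c) * Real.sqrt (c * S) := by
      refine mul_le_mul (Real.sqrt_le_sqrt hF) (le_of_eq (by rw [hG]))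
        (Real.sqrt_nonneg _) (Real.sqrt_nonneg _)
    have h3 : Real.sqrt (N * c) * Real.sqrt (c * S)
        = Real.sqrt N * c * Real.sqrt S := by
      rw [Real.sqrt_mul (by positivity), Real.sqrt_mul (le_of_lt hc0)]
      have : Real.sqrt c * Real.sqrt c = c := Real.mul_self_sqrt (le_of_lt hc0)
      ring_nf
      rw [Real.sq_sqrt (le_of_lt hc0)]
      ring
    have h4 : ∑ t : K × Fin N × Fin N, f t * g t ≤ Real.sqrt N * c * Real.sqrt S :=
      le_trans cauchy (le_trans h2 (le_of_eq h3))
    have h5 : (1 / c) * ∑ t : K × Fin N × Fin N, f t * g t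
        ≤ (1 / c) * (Real.sqrt N * c * Real.sqrt S) := by
      have h1c : (0 : ℝ) ≤ 1 / c := by positivity
      exact mul_le_mul_of_nonneg_left h4 h1c
    have h6 : (1 / c) * (Real.sqrt N * c * Real.sqrt S)
        = Real.sqrt N * Real.sqrt S := by
      field_simp
    have h7 : Real.sqrt N ≤ (N : ℝ) := by
      have : Real.sqrt N ≤ Real.sqrt ((N : ℝ) ^ 2) := by
        refine Real.sqrt_le_sqrt ?_
        have hN1 : (1 : ℝ) ≤ N := by exact_mod_cast hN
        nlinarith
      rwa [Real.sqrt_sq (by positivity)] at this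
    calc (1 / c) * ∑ t : K × Fin N × Fin N, f t * g t
        ≤ Real.sqrt N * Real.sqrt S := by rw [← h6]; exact h5
      _ ≤ N * Real.sqrt S :=
          mul_le_mul_of_nonneg_right h7 (Real.sqrt_nonneg _)
  exact le_trans hLHS hRHS
end
end

section
/- Let E be a complex inner product space, K a nonempty finite set, q ≥ 1 an integer, and ε ≥ 0. For each k ∈ K let ψ_k ∈ E be a unit vector, let Π_k and D_k be orthogonal projections on E, let O_k⁰, O_k¹ : E → E be unitaries with (O_k⁰ − O_k¹) ∘ (id − Π_k) = 0, and let A_{k,0}, …, A_{k,q} : E → E be unitaries. Define U_k^b := A_{k,q} O_k^b A_{k,q−1} O_k^b ⋯ O_k^b A_{k,0} for b ∈ {0,1}, and for 0 ≤ j ≤ q−1 define the prefix state φ_{k,j} := A_{k,j} O_k⁰ A_{k,j−1} ⋯ O_k⁰ A_{k,0} ψ_k. If (1/|K|)∑_{k∈K} ‖Π_k φ_{k,j}‖² ≤ ε for every 0 ≤ j ≤ q−1, then | (1/|K|)∑_{k∈K} ‖D_k U_k⁰ ψ_k‖² − (1/|K|)∑_{k∈K} ‖D_k U_k¹ ψ_k‖²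 | ≤ 4q√ε. -/
/-!
Lemma 2.6 (oracle-switching / "puncturing" hybrid lemma) of "Quantum State Obfuscation
from Classical Oracles": if two oracles agree outside a set of inputs that is hard to
find during a `q`-query computation with the first oracle, then the outputs of the two
computations are `4q√ε`-indistinguishable to any binary-outcome distinguisher.
-/

open scoped BigOperators

noncomputable section

/-- The state of a `q`-query oracle-aided unitary adversary after running the first
`j + 1` local unitaries `A 0, …, A j`, interleaved with `j` oracle calls `O`:
`run A O ψ j = A_j O A_{j−1} O ⋯ O A_0 ψ`. -/
def run {E : Type*} [NormedAddCommGroup E] [InnerProductSpace ℂ E]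
    (A : ℕ → (E ≃ₗᵢ[ℂ] E)) (O : E ≃ₗᵢ[ℂ] E) (ψ : E) : ℕ → E
  | 0 => A 0 ψ
  | (j + 1) => A (j + 1) (O (run A O ψ j))

section Aux

variable {E : Type*} [NormedAddCommGroup E] [InnerProductSpace ℂ E]

lemma proj_norm_le (P : E →ₗ[ℂ] E) (hidem : P ∘ₗ P = P)
    (hsa : ∀ u v : E, (inner ℂ (P u) v : ℂ) = inner ℂ u (P v)) (v : E) : ‖P v‖ ≤ ‖v‖ := by
  have h1 : (inner ℂ (P v) (P v) : ℂ) = inner ℂ v (P v) := by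
    rw [hsa]
    congr 1
    have := congrArg (fun f => f v) hidem
    simpa using this
  have h2 : ((‖P v‖ : ℂ)) ^ 2 = inner ℂ v (P v) := by
    rw [← h1, inner_self_eq_norm_sq_to_K]
    norm_cast
  have h3 : ‖P v‖ ^ 2 ≤ ‖v‖ * ‖P v‖ := by
    have := norm_inner_le_norm (𝕜 := ℂ) v (P v)
    calc ‖P v‖ ^ 2 = ‖((‖P v‖ : ℂ)) ^ 2‖ := by
          simp [norm_pow]
      _ = ‖(inner ℂ v (P v) : ℂ)‖ := by rw [h2]
      _ ≤ ‖v‖ * ‖P v‖ := this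
  nlinarith [norm_nonneg (P v), norm_nonneg v]

lemma run_norm (A : ℕ → (E ≃ₗᵢ[ℂ] E)) (O : E ≃ₗᵢ[ℂ] E) (ψ : E) (n : ℕ) :
    ‖run A O ψ n‖ = ‖ψ‖ := by
  induction n with
  | zero => simp [run]
  | succ j ih => simp [run, ih]

lemma run_diff_le (A : ℕ → (E ≃ₗᵢ[ℂ] E)) (O0 O1 : E ≃ₗᵢ[ℂ] E) (P : E →ₗ[ℂ] E)
    (hO : ∀ v : E, O0 (v - P v) = O1 (v - P v)) (ψ : E) (n : ℕ) :
    ‖run A O0 ψ n - run A O1 ψ n‖ ≤ ∑ j ∈ Finset.range n, 2 * ‖P (run A O0 ψ j)‖ := by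
  induction n with
  | zero => simp [run]
  | succ j ih =>
    rw [Finset.sum_range_succ]
    set r0 := run A O0 ψ j
    set r1 := run A O1 ψ j
    have key : ‖run A O0 ψ (j+1) - run A O1 ψ (j+1)‖
        ≤ ‖r0 - r1‖ + 2 * ‖P r0‖ := by
      have e1 : run A O0 ψ (j+1) - run A O1 ψ (j+1)
          = (A (j+1) (O0 r0) - A (j+1) (O1 r0)) + (A (j+1) (O1 r0) - A (j+1) (O1 r1)) := by
        simp only [run]
        abel
      rw [e1]
      have h2 : ‖A (j+1) (O1 r0) - A (j+1) (O1 r1)‖ = ‖r0 - r1‖ := by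
        rw [← LinearIsometryEquiv.map_sub, LinearIsometryEquiv.norm_map,
          ← LinearIsometryEquiv.map_sub, LinearIsometryEquiv.norm_map]
      have h3 : ‖A (j+1) (O0 r0) - A (j+1) (O1 r0)‖ ≤ 2 * ‖P r0‖ := by
        rw [← LinearIsometryEquiv.map_sub, LinearIsometryEquiv.norm_map]
        have e2 : O0 r0 - O1 r0 = O0 (P r0) - O1 (P r0) := by
          have := hO r0
          have e3 : O0 r0 = O0 (r0 - P r0) + O0 (P r0) := by
            rw [← LinearIsometryEquiv.map_add]; congr 1; abel
          have e4 : O1 r0 = O1 (r0 - P r0) + O1 (P r0) := by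
            rw [← LinearIsometryEquiv.map_add]; congr 1; abel
          rw [e3, e4, this]; abel
        rw [e2]
        calc ‖O0 (P r0) - O1 (P r0)‖ ≤ ‖O0 (P r0)‖ + ‖O1 (P r0)‖ := norm_sub_le _ _
          _ = 2 * ‖P r0‖ := by simp [LinearIsometryEquiv.norm_map]; ring
      calc ‖_ + _‖ ≤ ‖A (j+1) (O0 r0) - A (j+1) (O1 r0)‖ + ‖A (j+1) (O1 r0) - A (j+1) (O1 r1)‖ :=
            norm_add_le _ _
        _ ≤ 2 * ‖P r0‖ + ‖r0 - r1‖ := by rw [h2]; linarith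
        _ = ‖r0 - r1‖ + 2 * ‖P r0‖ := by ring
    linarith

lemma dist_sq_bound (D : E →ₗ[ℂ] E) (hD : ∀ w : E, ‖D w‖ ≤ ‖w‖)
    (u v : E) (hu : ‖u‖ = 1) (hv : ‖v‖ = 1) :
    |‖D u‖ ^ 2 - ‖D v‖ ^ 2| ≤ 2 * ‖u - v‖ := by
  have h1 : |‖D u‖ - ‖D v‖| ≤ ‖u - v‖ := by
    calc |‖D u‖ - ‖D v‖| ≤ ‖D u - D v‖ := abs_norm_sub_norm_le _ _
      _ = ‖D (u - v)‖ := by rw [map_sub]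
      _ ≤ ‖u - v‖ := hD _
  have h2 : ‖D u‖ ≤ 1 := hu ▸ hD u
  have h3 : ‖D v‖ ≤ 1 := hv ▸ hD v
  have h4 : ‖D u‖ ^ 2 - ‖D v‖ ^ 2 = (‖D u‖ - ‖D v‖) * (‖D u‖ + ‖D v‖) := by ring
  rw [h4, abs_mul]
  have h5 : |‖D u‖ + ‖D v‖| ≤ 2 := by
    rw [abs_of_nonneg (by positivity)]
    linarith
  calc |‖D u‖ - ‖D v‖| * |‖D u‖ + ‖D v‖| ≤ ‖u - v‖ * 2 :=
        mul_le_mul h1 h5 (abs_nonneg _) (norm_nonneg _)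
    _ = 2 * ‖u - v‖ := by ring

end Aux

/-- For each key `k`, let `ψ_k` be a unit vector, `Π_k` and `D_k` orthogonal
projections, `O_k⁰, O_k¹` unitaries agreeing on the range of `id − Π_k`, and
`A_{k,0}, …, A_{k,q}` unitaries.  Write `U_k^b := A_{k,q} O_k^b ⋯ O_k^b A_{k,0}` and
`φ_{k,j} := A_{k,j} O_k⁰ ⋯ O_k⁰ A_{k,0} ψ_k`.  If `𝔼_k ‖Π_k φ_{k,j}‖² ≤ ε` for every
`0 ≤ j ≤ q − 1`, then `|𝔼_k ‖D_k U_k⁰ ψ_k‖² − 𝔼_k ‖D_k U_k¹ ψ_k‖²| ≤ 4q√ε`. -/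
theorem oracle_switching
    {E : Type*} [NormedAddCommGroup E] [InnerProductSpace ℂ E]
    {K : Type*} [Fintype K] [Nonempty K]
    {q : ℕ} (hq : 1 ≤ q) {ε : ℝ} (hε : 0 ≤ ε)
    (ψ : K → E) (hψ : ∀ k, ‖ψ k‖ = 1)
    (Pk : K → E →ₗ[ℂ] E)
    (hPkidem : ∀ k, Pk k ∘ₗ Pk k = Pk k)
    (hPksa : ∀ k (u v : E), (inner ℂ (Pk k u) v : ℂ) = inner ℂ u (Pk k v))
    (D : K → E →ₗ[ℂ] E)
    (hDidem : ∀ k, D k ∘ₗ D k = D k)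
    (hDsa : ∀ k (u v : E), (inner ℂ (D k u) v : ℂ) = inner ℂ u (D k v))
    (O : K → Bool → (E ≃ₗᵢ[ℂ] E))
    (hO : ∀ k (v : E), O k false (v - Pk k v) = O k true (v - Pk k v))
    (A : K → ℕ → (E ≃ₗᵢ[ℂ] E))
    (hhard : ∀ j, j ≤ q - 1 →
      (1 / (Fintype.card K : ℝ)) *
          ∑ k, ‖Pk k (run (A k) (O k false) (ψ k) j)‖ ^ 2 ≤ ε) :
    |(1 / (Fintype.card K : ℝ)) * ∑ k, ‖D k (run (A k) (O k false) (ψ k) q)‖ ^ 2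
        - (1 / (Fintype.card K : ℝ)) * ∑ k, ‖D k (run (A k) (O k true) (ψ k) q)‖ ^ 2|
      ≤ 4 * q * Real.sqrt ε := by
  set N : ℝ := (Fintype.card K : ℝ) with hN
  have hN0 : 0 < N := by
    have : 0 < Fintype.card K := Fintype.card_pos
    rw [hN]; exact_mod_cast this
  set u : K → E := fun k => run (A k) (O k false) (ψ k) q
  set v : K → E := fun k => run (A k) (O k true) (ψ k) q
  set φ : K → ℕ → E := fun k j => run (A k) (O k false) (ψ k) j
  -- per-key bound
  have hkey : ∀ k, |‖D k (u k)‖ ^ 2 - ‖D k (v k)‖ ^ 2|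
      ≤ ∑ j ∈ Finset.range q, 4 * ‖Pk k (φ k j)‖ := by
    intro k
    have hu : ‖u k‖ = 1 := by rw [show u k = run (A k) (O k false) (ψ k) q from rfl,
      run_norm, hψ]
    have hv : ‖v k‖ = 1 := by rw [show v k = run (A k) (O k true) (ψ k) q from rfl,
      run_norm, hψ]
    have hDle := proj_norm_le (D k) (hDidem k) (hDsa k)
    have h1 := dist_sq_bound (D k) hDle (u k) (v k) hu hv
    have h2 := run_diff_le (A k) (O k false) (O k true) (Pk k) (hO k) (ψ k) q
    calc |‖D k (u k)‖ ^ 2 - ‖D k (v k)‖ ^ 2| ≤ 2 * ‖u k - v k‖ := h1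
      _ ≤ 2 * ∑ j ∈ Finset.range q, 2 * ‖Pk k (φ k j)‖ := by
          have : ‖u k - v k‖ ≤ ∑ j ∈ Finset.range q, 2 * ‖Pk k (φ k j)‖ := h2
          linarith
      _ = ∑ j ∈ Finset.range q, 4 * ‖Pk k (φ k j)‖ := by
          rw [Finset.mul_sum]; congr 1; ext j; ring
  -- mean over k of ‖Pk φ‖ is at most √ε
  have hmean : ∀ j ∈ Finset.range q,
      (1 / N) * ∑ k, ‖Pk k (φ k j)‖ ≤ Real.sqrt ε := by
    intro j hj
    have hj' : j ≤ q - 1 := by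
      have := Finset.mem_range.mp hj; omega
    have hCS : (∑ k, ‖Pk k (φ k j)‖) ^ 2 ≤ N * ∑ k, ‖Pk k (φ k j)‖ ^ 2 := by
      have := sq_sum_le_card_mul_sum_sq
        (s := (Finset.univ : Finset K)) (f := fun k => ‖Pk k (φ k j)‖)
      simpa [hN] using this
    have hsum : (1 / N) * ∑ k, ‖Pk k (φ k j)‖ ^ 2 ≤ ε := hhard j hj'
    have hx : 0 ≤ (1 / N) * ∑ k, ‖Pk k (φ k j)‖ := by positivity
    rw [show Real.sqrt ε = Real.sqrt ε from rfl]
    rw [← Real.sqrt_sq hx]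
    apply Real.sqrt_le_sqrt
    have : ((1 / N) * ∑ k, ‖Pk k (φ k j)‖) ^ 2
        = (1 / N) ^ 2 * (∑ k, ‖Pk k (φ k j)‖) ^ 2 := by ring
    rw [this]
    calc (1 / N) ^ 2 * (∑ k, ‖Pk k (φ k j)‖) ^ 2
        ≤ (1 / N) ^ 2 * (N * ∑ k, ‖Pk k (φ k j)‖ ^ 2) := by
          apply mul_le_mul_of_nonneg_left hCS (by positivity)
      _ = (1 / N) * ∑ k, ‖Pk k (φ k j)‖ ^ 2 := by
          field_simp
      _ ≤ ε := hsum
  -- assemble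
  have step1 : |(1 / N) * ∑ k, ‖D k (u k)‖ ^ 2 - (1 / N) * ∑ k, ‖D k (v k)‖ ^ 2|
      ≤ (1 / N) * ∑ k, |‖D k (u k)‖ ^ 2 - ‖D k (v k)‖ ^ 2| := by
    rw [← mul_sub, ← Finset.sum_sub_distrib, abs_mul, abs_of_nonneg (by positivity : (0:ℝ) ≤ 1 / N)]
    exact mul_le_mul_of_nonneg_left (Finset.abs_sum_le_sum_abs _ _) (by positivity)
  have step2 : (1 / N) * ∑ k, |‖D k (u k)‖ ^ 2 - ‖D k (v k)‖ ^ 2|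
      ≤ (1 / N) * ∑ k, ∑ j ∈ Finset.range q, 4 * ‖Pk k (φ k j)‖ :=
    mul_le_mul_of_nonneg_left (Finset.sum_le_sum fun k _ => hkey k) (by positivity)
  have step3 : (1 / N) * ∑ k, ∑ j ∈ Finset.range q, 4 * ‖Pk k (φ k j)‖
      = ∑ j ∈ Finset.range q, 4 * ((1 / N) * ∑ k, ‖Pk k (φ k j)‖) := by
    rw [Finset.sum_comm, Finset.mul_sum]
    apply Finset.sum_congr rfl
    intro j _
    rw [Finset.mul_sum, Finset.mul_sum, Finset.mul_sum]
    apply Finset.sum_congr rfl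
    intro k _
    ring
  have step4 : ∑ j ∈ Finset.range q, 4 * ((1 / N) * ∑ k, ‖Pk k (φ k j)‖)
      ≤ ∑ j ∈ Finset.range q, 4 * Real.sqrt ε := by
    apply Finset.sum_le_sum
    intro j hj
    have := hmean j hj
    linarith
  have step5 : (∑ j ∈ Finset.range q, 4 * Real.sqrt ε) = 4 * q * Real.sqrt ε := by
    rw [Finset.sum_const, Finset.card_range]
    push_cast; ring
  calc |(1 / N) * ∑ k, ‖D k (u k)‖ ^ 2 - (1 / N) * ∑ k, ‖D k (v k)‖ ^ 2|
      ≤ (1 / N) * ∑ k, |‖D k (u k)‖ ^ 2 - ‖D k (v k)‖ ^ 2| := step1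
    _ ≤ (1 / N) * ∑ k, ∑ j ∈ Finset.range q, 4 * ‖Pk k (φ k j)‖ := step2
    _ = ∑ j ∈ Finset.range q, 4 * ((1 / N) * ∑ k, ‖Pk k (φ k j)‖) := step3
    _ ≤ ∑ j ∈ Finset.range q, 4 * Real.sqrt ε := step4
    _ = 4 * q * Real.sqrt ε := step5
end
end
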